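/- arXiv:1302.5974 — 5 statements merged into one kernel-verified Lean document; each statement's English description precedes it below -/
import Mathlib

section
/- Let W_mid be a real symmetric n×n matrix and ΔW a symmetric n×n matrix with nonnegative entries. If the spectral radius ρ(ΔW) satisfies ρ(ΔW) ≤ λ_min(W_mid), where λ_min(W_mid) is the minimum eigenvalue of W_mid, then every symmetric matrix W with |W_{ij} − (W_mid)_{ij}| ≤ (ΔW)_{ij} for all i,j is positive semidefinite. -/
open Matrix in
/-- Quadratic form of a real symmetric matrix in terms of its eigenvalues. -/
theorem aux_quad_repr {n : ℕ} (A : Matrix (Fin n) (Fin n) ℝ) (hA : A.IsHermitian)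
    (x : Fin n → ℝ) :
    ∃ y : Fin n → ℝ, x ⬝ᵥ A *ᵥ x = ∑ i, hA.eigenvalues i * (y i)^2 ∧
      ∑ i, (y i)^2 = x ⬝ᵥ x := by
  set U : Matrix (Fin n) (Fin n) ℝ := (hA.eigenvectorUnitary : Matrix (Fin n) (Fin n) ℝ) with hU
  have hUU : U * star U = 1 := (Matrix.mem_unitaryGroup_iff).mp hA.eigenvectorUnitary.2
  set y := star U *ᵥ x with hy
  have hx : x ᵥ* U = y := by
    ext i
    simp [hy, vecMul, mulVec, dotProduct, star_eq_conjTranspose, conjTranspose_apply, mul_comm]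
  refine ⟨y, ?_, ?_⟩
  · conv_lhs => rw [hA.spectral_theorem, Unitary.conjStarAlgAut_apply]
    rw [← hU, ← mulVec_mulVec, ← mulVec_mulVec, dotProduct_mulVec, hx]
    simp [mulVec_diagonal, dotProduct, pow_two, mul_comm, mul_assoc, mul_left_comm, ← hy]
  · have h2 : y ⬝ᵥ y = x ⬝ᵥ x := by
      rw [← hx, ← dotProduct_mulVec, hx, hy, mulVec_mulVec, hUU, one_mulVec]
    simpa [dotProduct, pow_two] using h2

open Matrix in
theorem aux_lower {n : ℕ} (A : Matrix (Fin n) (Fin n) ℝ) (hA : A.IsHermitian)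
    (x : Fin n → ℝ) : (⨅ i, hA.eigenvalues i) * (x ⬝ᵥ x) ≤ x ⬝ᵥ A *ᵥ x := by
  rcases Nat.eq_zero_or_pos n with h0 | hpos
  · subst h0; simp [dotProduct]
  have : Nonempty (Fin n) := ⟨⟨0, hpos⟩⟩
  obtain ⟨y, hrep, hnorm⟩ := aux_quad_repr A hA x
  rw [hrep, ← hnorm, Finset.mul_sum]
  refine Finset.sum_le_sum fun i _ => ?_
  exact mul_le_mul_of_nonneg_right
    (ciInf_le (Set.Finite.bddBelow (Set.finite_range _)) i) (sq_nonneg _)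

open Matrix in
theorem aux_upper {n : ℕ} (A : Matrix (Fin n) (Fin n) ℝ) (hA : A.IsHermitian)
    (x : Fin n → ℝ) : x ⬝ᵥ A *ᵥ x ≤ (⨆ i, |hA.eigenvalues i|) * (x ⬝ᵥ x) := by
  rcases Nat.eq_zero_or_pos n with h0 | hpos
  · subst h0; simp [dotProduct]
  have : Nonempty (Fin n) := ⟨⟨0, hpos⟩⟩
  obtain ⟨y, hrep, hnorm⟩ := aux_quad_repr A hA x
  rw [hrep, ← hnorm, Finset.mul_sum]
  refine Finset.sum_le_sum fun i _ => ?_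
  refine mul_le_mul_of_nonneg_right ?_ (sq_nonneg _)
  exact le_trans (le_abs_self _)
    (le_ciSup (f := fun i => |hA.eigenvalues i|) (Set.Finite.bddAbove (Set.finite_range _)) i)

/-- If the spectral radius of the symmetric nonnegative radius
matrix `ΔW` is at most the minimum eigenvalue of the symmetric midpoint matrix
`Wmid`, then every symmetric matrix within the interval matrix
`[Wmid - ΔW, Wmid + ΔW]` is positive semidefinite. -/
theorem interval_matrix_posSemidef {n : ℕ} [NeZero n]
    (Wmid ΔW : Matrix (Fin n) (Fin n) ℝ)
    (hWmid : Wmid.IsHermitian) (hΔ : ΔW.IsHermitian)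
    (hΔnonneg : ∀ i j, 0 ≤ ΔW i j)
    (hρ : (⨆ i, |hΔ.eigenvalues i|) ≤ ⨅ i, hWmid.eigenvalues i) :
    ∀ W : Matrix (Fin n) (Fin n) ℝ, W.IsHermitian →
      (∀ i j, |W i j - Wmid i j| ≤ ΔW i j) → W.PosSemidef := by
  intro W hW hWbound
  refine Matrix.posSemidef_iff_dotProduct_mulVec.mpr ⟨hW, fun x => ?_⟩
  have hstar : star x = x := funext fun i => star_trivial _
  rw [hstar]
  set z := fun i : Fin n => |x i| with hz
  have hzz : dotProduct z z = dotProduct x x := by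
    simp only [dotProduct, hz]
    exact Finset.sum_congr rfl fun i _ => abs_mul_abs_self _
  have hsplit : dotProduct x (Matrix.mulVec W x) =
      dotProduct x (Matrix.mulVec Wmid x) +
      dotProduct x (Matrix.mulVec (W - Wmid) x) := by
    rw [← dotProduct_add, ← Matrix.add_mulVec, add_sub_cancel]
  have hE : -(dotProduct z (Matrix.mulVec ΔW z)) ≤
      dotProduct x (Matrix.mulVec (W - Wmid) x) := by
    simp only [dotProduct, Matrix.mulVec, Finset.mul_sum,
      ← Finset.sum_neg_distrib]
    refine Finset.sum_le_sum fun i _ => Finset.sum_le_sum fun j _ => ?_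
    have h1 : |x i * ((W - Wmid) i j * x j)| ≤ z i * (ΔW i j * z j) := by
      rw [abs_mul, abs_mul]
      exact mul_le_mul_of_nonneg_left
        (mul_le_mul_of_nonneg_right (by simpa using hWbound i j) (abs_nonneg _))
        (abs_nonneg _)
    calc -(z i * (ΔW i j * z j)) ≤ -|x i * ((W - Wmid) i j * x j)| := neg_le_neg h1
    _ ≤ x i * ((W - Wmid) i j * x j) := neg_abs_le _
  have hxx : (0:ℝ) ≤ dotProduct x x := by
    simp only [dotProduct]
    exact Finset.sum_nonneg fun i _ => mul_self_nonneg _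
  have h1 := aux_lower Wmid hWmid x
  have h2 := aux_upper ΔW hΔ z
  rw [hzz] at h2
  rw [hsplit]
  have h3 : (⨆ i, |hΔ.eigenvalues i|) * dotProduct x x ≤
      (⨅ i, hWmid.eigenvalues i) * dotProduct x x :=
    mul_le_mul_of_nonneg_right hρ hxx
  linarith
end

section
/- Let W_mid be a real symmetric n×n matrix and ΔW a symmetric n×n matrix with nonnegative entries. If ρ(ΔW) < λ_min(W_mid), then every symmetric matrix W with |W_{ij} − (W_mid)_{ij}| ≤ (ΔW)_{ij} for all i,j is positive definite. -/
open Matrix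

private lemma quad_repr {n : ℕ} {A : Matrix (Fin n) (Fin n) ℝ} (hA : A.IsHermitian)
    (x : Fin n → ℝ) :
    ∃ y : Fin n → ℝ, (∑ i, (y i)^2 = ∑ i, (x i)^2) ∧
      x ⬝ᵥ A *ᵥ x = ∑ i, hA.eigenvalues i * (y i)^2 := by
  classical
  set U : Matrix (Fin n) (Fin n) ℝ := (hA.eigenvectorUnitary : Matrix (Fin n) (Fin n) ℝ) with hU
  have hstar : star U = Uᵀ := by
    rw [Matrix.star_eq_conjTranspose]
    ext i j; simp [Matrix.conjTranspose_apply]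
  have hUUt : U * Uᵀ = 1 := by
    have := (Matrix.mem_unitaryGroup_iff).mp hA.eigenvectorUnitary.2
    rwa [hstar] at this
  refine ⟨x ᵥ* U, ?_, ?_⟩
  · have h1 : (x ᵥ* U) ⬝ᵥ (x ᵥ* U) = x ⬝ᵥ x := by
      rw [← Matrix.dotProduct_mulVec, Matrix.mulVec_vecMul, hUUt, Matrix.one_mulVec]
    simpa [dotProduct, pow_two] using h1
  · have hdec := hA.spectral_theorem
    rw [Unitary.conjStarAlgAut_apply, ← hU, hstar] at hdec
    calc x ⬝ᵥ A *ᵥ x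
        = x ⬝ᵥ (U * Matrix.diagonal (RCLike.ofReal ∘ hA.eigenvalues) * Uᵀ) *ᵥ x := by
          rw [← hdec]
      _ = (x ᵥ* U) ⬝ᵥ (Matrix.diagonal (RCLike.ofReal ∘ hA.eigenvalues)) *ᵥ (Uᵀ *ᵥ x) := by
          rw [← Matrix.mulVec_mulVec, ← Matrix.mulVec_mulVec, Matrix.dotProduct_mulVec]
      _ = ∑ i, hA.eigenvalues i * ((x ᵥ* U) i)^2 := by
          rw [Matrix.mulVec_transpose]
          simp [dotProduct, Matrix.mulVec_diagonal, pow_two]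
          ring_nf
          exact Finset.sum_congr rfl fun i _ => by ring

private lemma quad_lower {n : ℕ} [NeZero n] {A : Matrix (Fin n) (Fin n) ℝ}
    (hA : A.IsHermitian) (x : Fin n → ℝ) :
    (⨅ i, hA.eigenvalues i) * ∑ i, (x i)^2 ≤ x ⬝ᵥ A *ᵥ x := by
  obtain ⟨y, hy, hq⟩ := quad_repr hA x
  rw [hq, ← hy, Finset.mul_sum]
  refine Finset.sum_le_sum fun i _ => ?_
  exact mul_le_mul_of_nonneg_right
    (ciInf_le (Set.Finite.bddBelow (Set.finite_range _)) i) (sq_nonneg _)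

private lemma quad_upper {n : ℕ} [NeZero n] {A : Matrix (Fin n) (Fin n) ℝ}
    (hA : A.IsHermitian) (x : Fin n → ℝ) :
    x ⬝ᵥ A *ᵥ x ≤ (⨆ i, hA.eigenvalues i) * ∑ i, (x i)^2 := by
  obtain ⟨y, hy, hq⟩ := quad_repr hA x
  rw [hq, ← hy, Finset.mul_sum]
  refine Finset.sum_le_sum fun i _ => ?_
  exact mul_le_mul_of_nonneg_right
    (le_ciSup (Set.Finite.bddAbove (Set.finite_range _)) i) (sq_nonneg _)

/-- If the spectral radius of `ΔW` is strictly less than the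
minimum eigenvalue of `Wmid`, then every symmetric matrix within the interval
matrix `[Wmid - ΔW, Wmid + ΔW]` is positive definite. -/
theorem interval_matrix_posDef {n : ℕ} [NeZero n]
    (Wmid ΔW : Matrix (Fin n) (Fin n) ℝ)
    (hWmid : Wmid.IsHermitian) (hΔ : ΔW.IsHermitian)
    (hΔnonneg : ∀ i j, 0 ≤ ΔW i j)
    (hρ : (⨆ i, |hΔ.eigenvalues i|) < ⨅ i, hWmid.eigenvalues i) :
    ∀ W : Matrix (Fin n) (Fin n) ℝ, W.IsHermitian →
      (∀ i j, |W i j - Wmid i j| ≤ ΔW i j) → W.PosDef := by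
  intro W hW hWin
  refine Matrix.PosDef.of_dotProduct_mulVec_pos hW fun x hx => ?_
  have hsx : star x = x := by funext i; simp
  rw [hsx]
  set s : ℝ := ∑ i, (x i)^2 with hs
  have hs_pos : 0 < s := by
    obtain ⟨i, hi⟩ := Function.ne_iff.mp hx
    refine Finset.sum_pos' (fun j _ => sq_nonneg _) ⟨i, Finset.mem_univ i, ?_⟩
    exact pow_pos (abs_pos.mpr hi) 2 |>.trans_le (by rw [sq_abs])
  set z : Fin n → ℝ := fun i => |x i| with hz
  have hzs : ∑ i, (z i)^2 = s := by simp [hz, hs, sq_abs]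
  -- bound the perturbation term
  have hE : |x ⬝ᵥ (W - Wmid) *ᵥ x| ≤ z ⬝ᵥ ΔW *ᵥ z := by
    have h1 : x ⬝ᵥ (W - Wmid) *ᵥ x = ∑ i, ∑ j, x i * ((W - Wmid) i j * x j) := by
      simp [dotProduct, Matrix.mulVec, Finset.mul_sum]
    have h2 : z ⬝ᵥ ΔW *ᵥ z = ∑ i, ∑ j, z i * (ΔW i j * z j) := by
      simp [dotProduct, Matrix.mulVec, Finset.mul_sum]
    rw [h1, h2]
    calc |∑ i, ∑ j, x i * ((W - Wmid) i j * x j)|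
        ≤ ∑ i, ∑ j, |x i * ((W - Wmid) i j * x j)| := by
          refine (Finset.abs_sum_le_sum_abs _ _).trans ?_
          exact Finset.sum_le_sum fun i _ => Finset.abs_sum_le_sum_abs _ _
      _ ≤ ∑ i, ∑ j, z i * (ΔW i j * z j) := by
          refine Finset.sum_le_sum fun i _ => Finset.sum_le_sum fun j _ => ?_
          rw [abs_mul, abs_mul]
          refine mul_le_mul_of_nonneg_left ?_ (abs_nonneg _)
          exact mul_le_mul_of_nonneg_right (hWin i j) (abs_nonneg _)
  have hEup : z ⬝ᵥ ΔW *ᵥ z ≤ (⨆ i, |hΔ.eigenvalues i|) * s := by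
    refine (quad_upper hΔ z).trans ?_
    rw [hzs]
    refine mul_le_mul_of_nonneg_right ?_ hs_pos.le
    refine ciSup_le fun i => ?_
    exact (le_abs_self _).trans (le_ciSup (f := fun i => |hΔ.eigenvalues i|) (Set.Finite.bddAbove (Set.finite_range _)) i)
  have hlow : (⨅ i, hWmid.eigenvalues i) * s ≤ x ⬝ᵥ Wmid *ᵥ x := quad_lower hWmid x
  have hsplit : x ⬝ᵥ W *ᵥ x = x ⬝ᵥ Wmid *ᵥ x + x ⬝ᵥ (W - Wmid) *ᵥ x := by
    rw [Matrix.sub_mulVec, dotProduct_sub]; ring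
  have hEabs : -((⨆ i, |hΔ.eigenvalues i|) * s) ≤ x ⬝ᵥ (W - Wmid) *ᵥ x :=
    neg_le_of_abs_le (hE.trans hEup)
  calc (0:ℝ) < ((⨅ i, hWmid.eigenvalues i) - (⨆ i, |hΔ.eigenvalues i|)) * s :=
        mul_pos (sub_pos.mpr hρ) hs_pos
    _ = (⨅ i, hWmid.eigenvalues i) * s - (⨆ i, |hΔ.eigenvalues i|) * s := by ring
    _ ≤ x ⬝ᵥ Wmid *ᵥ x + x ⬝ᵥ (W - Wmid) *ᵥ x := by linarith
    _ = x ⬝ᵥ W *ᵥ x := hsplit.symm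
end

section
/- Let F : ℝⁿ → ℝⁿ be continuously differentiable, x̂ ∈ [x] where [x] ⊂ ℝⁿ is a compact box, and C an n×n real matrix. Define the Krawczyk set K(x̂,[x],F) = { x̂ − C·F(x̂) + (I − C·J)·(y − x̂) : y ∈ [x], J an n×n matrix with J_{ij} ∈ [F′]([x])_{ij} }, where [F′]([x]) is an interval matrix containing F′(z) for all z ∈ [x]. If K(x̂,[x],F) is contained in the interior of [x], then there exists a unique x* ∈ K(x̂,[x],F) with F(x*) = 0. -/
/-- The Jacobian matrix of `F` at `z`: entry `(i, j)` is the partial derivative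
of the `i`-th component of `F` with respect to the `j`-th variable. -/
noncomputable def jacobianMatrix {n : ℕ} (F : (Fin n → ℝ) → (Fin n → ℝ))
    (z : Fin n → ℝ) : Matrix (Fin n) (Fin n) ℝ :=
  fun i j => fderiv ℝ F z (Pi.single j 1) i

lemma clm_eval_sum {n : ℕ} (L : (Fin n → ℝ) →L[ℝ] (Fin n → ℝ)) (v : Fin n → ℝ) (i : Fin n) :
    L v i = ∑ j, v j * L (Pi.single j 1) i := by
  have hv : v = ∑ j, v j • (Pi.single j 1 : Fin n → ℝ) := by
    funext k
    simp [Finset.sum_apply, Pi.single_apply, mul_comm]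
  conv_lhs => rw [hv]
  rw [map_sum]
  simp [Finset.sum_apply, smul_eq_mul]

lemma mvt_rows {n : ℕ} (F : (Fin n → ℝ) → (Fin n → ℝ)) (hF : ContDiff ℝ 1 F)
    {lo hi : Fin n → ℝ} {a b : Fin n → ℝ}
    (ha : a ∈ Set.Icc lo hi) (hb : b ∈ Set.Icc lo hi) :
    ∃ z : Fin n → (Fin n → ℝ), (∀ i, z i ∈ Set.Icc lo hi) ∧
      ∀ i, F b i - F a i = ∑ j, jacobianMatrix F (z i) i j * (b j - a j) := by
  have hdF : Differentiable ℝ F := hF.differentiable one_ne_zero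
  set γ : ℝ → (Fin n → ℝ) := fun t => a + t • (b - a) with hγ
  have hγmem : ∀ t ∈ Set.Icc (0:ℝ) 1, γ t ∈ Set.Icc lo hi := fun t ht =>
    (convex_Icc lo hi).add_smul_sub_mem ha hb ht
  have hγderiv : ∀ t : ℝ, HasDerivAt γ (b - a) t := by
    intro t
    have : HasDerivAt (fun t : ℝ => t • (b - a)) (b - a) t := by
      simpa using (hasDerivAt_id t).smul_const (b - a)
    simpa [hγ] using this.const_add a
  have key : ∀ i : Fin n, ∃ z ∈ Set.Icc lo hi,
      F b i - F a i = fderiv ℝ F z (b - a) i := by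
    intro i
    set φ : ℝ → ℝ := fun t => F (γ t) i with hφ
    have hd : ∀ t : ℝ, HasDerivAt φ (fderiv ℝ F (γ t) (b - a) i) t := by
      intro t
      have h1 : HasDerivAt (fun t => F (γ t)) (fderiv ℝ F (γ t) (b - a)) t :=
        (hdF (γ t)).hasFDerivAt.comp_hasDerivAt t (hγderiv t)
      have h2 := (ContinuousLinearMap.proj (R := ℝ) (φ := fun _ : Fin n => ℝ) i
        ).hasFDerivAt.comp_hasDerivAt t h1
      exact h2
    obtain ⟨c, hc, hceq⟩ := exists_deriv_eq_slope φ (by norm_num : (0:ℝ) < 1)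
      (fun t _ => (hd t).continuousAt.continuousWithinAt)
      (fun t _ => (hd t).differentiableAt.differentiableWithinAt)
    refine ⟨γ c, hγmem c (Set.mem_Icc.2 ⟨le_of_lt hc.1, le_of_lt hc.2⟩), ?_⟩
    have h0 : φ 0 = F a i := by simp [hφ, hγ]
    have h1 : φ 1 = F b i := by simp [hφ, hγ]
    rw [(hd c).deriv, h0, h1] at hceq
    rw [hceq]; ring
  choose z hz hzeq using key
  refine ⟨z, hz, fun i => ?_⟩
  rw [hzeq i]
  rw [clm_eval_sum]
  simp [jacobianMatrix, mul_comm]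

/-- Krawczyk operator test: if the Krawczyk set
`K(xh,[x],F) = { xh − C·F(xh) + (I − C·J)·(y − xh) }` (over `y` in the box and
`J` in an interval enclosure of the Jacobian) is contained in the interior of
the box `[x]`, then `F` has a unique zero in `K(xh,[x],F)`. -/
theorem krawczyk_existence_uniqueness {n : ℕ}
    (F : (Fin n → ℝ) → (Fin n → ℝ)) (hF : ContDiff ℝ 1 F)
    (lo hi : Fin n → ℝ) (hbox : lo ≤ hi)
    (xh : Fin n → ℝ) (hxh : xh ∈ Set.Icc lo hi)
    (C : Matrix (Fin n) (Fin n) ℝ)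
    (Jlo Jhi : Matrix (Fin n) (Fin n) ℝ)
    (hencl : ∀ z ∈ Set.Icc lo hi, ∀ i j,
      Jlo i j ≤ jacobianMatrix F z i j ∧ jacobianMatrix F z i j ≤ Jhi i j)
    (Kset : Set (Fin n → ℝ))
    (hKset : Kset = { w | ∃ y ∈ Set.Icc lo hi, ∃ J : Matrix (Fin n) (Fin n) ℝ,
      (∀ i j, Jlo i j ≤ J i j ∧ J i j ≤ Jhi i j) ∧
      w = xh - C.mulVec (F xh) + (1 - C * J).mulVec (y - xh) })
    (hsub : Kset ⊆ interior (Set.Icc lo hi)) :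
    ∃! x : Fin n → ℝ, x ∈ Kset ∧ F x = 0 := by
  classical
  subst hKset
  set g : (Fin n → ℝ) → (Fin n → ℝ) := fun y => y - C.mulVec (F y) with hg
  have hJloJhi : ∀ i j, Jlo i j ≤ Jhi i j := fun i j =>
    (hencl xh hxh i j).1.trans (hencl xh hxh i j).2
  have hint : interior (Set.Icc lo hi) = Set.pi Set.univ (fun i => Set.Ioo (lo i) (hi i)) := by
    rw [← Set.pi_univ_Icc, interior_pi_set Set.finite_univ]
    simp only [interior_Icc]
  -- a canonical element of Kset, to show lo < hi
  have hk0 : (xh - C.mulVec (F xh)) ∈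
      { w | ∃ y ∈ Set.Icc lo hi, ∃ J : Matrix (Fin n) (Fin n) ℝ,
        (∀ i j, Jlo i j ≤ J i j ∧ J i j ≤ Jhi i j) ∧
        w = xh - C.mulVec (F xh) + (1 - C * J).mulVec (y - xh) } := by
    refine ⟨xh, hxh, Jlo, fun i j => ⟨le_rfl, hJloJhi i j⟩, ?_⟩
    simp
  have hw : ∀ i, lo i < hi i := by
    intro i
    have h := hsub hk0
    rw [hint] at h
    have h2 := h i (Set.mem_univ i)
    exact h2.1.trans h2.2
  set w : Fin n → ℝ := fun i => hi i - lo i with hwdef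
  have hwpos : ∀ i, 0 < w i := fun i => sub_pos.2 (hw i)
  -- MVT
  have hmvt : ∀ a ∈ Set.Icc lo hi, ∀ b ∈ Set.Icc lo hi,
      ∃ J : Matrix (Fin n) (Fin n) ℝ,
      (∀ i j, Jlo i j ≤ J i j ∧ J i j ≤ Jhi i j) ∧ F b - F a = J.mulVec (b - a) := by
    intro a ha b hb
    obtain ⟨z, hz, hzeq⟩ := mvt_rows F hF ha hb
    refine ⟨fun i j => jacobianMatrix F (z i) i j,
      fun i j => hencl (z i) (hz i) i j, ?_⟩
    funext i
    simpa [Matrix.mulVec, dotProduct] using hzeq i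
  -- g maps box into Kset
  have hgK : ∀ y ∈ Set.Icc lo hi, g y ∈
      { w | ∃ y ∈ Set.Icc lo hi, ∃ J : Matrix (Fin n) (Fin n) ℝ,
        (∀ i j, Jlo i j ≤ J i j ∧ J i j ≤ Jhi i j) ∧
        w = xh - C.mulVec (F xh) + (1 - C * J).mulVec (y - xh) } := by
    intro y hy
    obtain ⟨J, hJ, hJeq⟩ := hmvt xh hxh y hy
    refine ⟨y, hy, J, hJ, ?_⟩
    have h1 : (1 - C * J).mulVec (y - xh) = (y - xh) - C.mulVec (F y - F xh) := by
      rw [Matrix.sub_mulVec, Matrix.one_mulVec, ← Matrix.mulVec_mulVec, ← hJeq]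
    rw [h1, Matrix.mulVec_sub]
    show y - C.mulVec (F y) = _
    abel
  -- strict row bound for each J in the enclosure
  have hrow : ∀ J : Matrix (Fin n) (Fin n) ℝ,
      (∀ i j, Jlo i j ≤ J i j ∧ J i j ≤ Jhi i j) →
      ∀ i, ∑ j, |(1 - C * J) i j| * w j < w i := by
    intro J hJ i
    set M : Matrix (Fin n) (Fin n) ℝ := 1 - C * J with hM
    set yp : Fin n → ℝ := fun j => if 0 ≤ M i j then hi j else lo j with hyp
    set ym : Fin n → ℝ := fun j => if 0 ≤ M i j then lo j else hi j with hym
    have hypmem : yp ∈ Set.Icc lo hi := by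
      constructor <;> intro j <;> by_cases h : 0 ≤ M i j <;>
        simp [hyp, h, hbox j]
    have hymmem : ym ∈ Set.Icc lo hi := by
      constructor <;> intro j <;> by_cases h : 0 ≤ M i j <;>
        simp [hym, h, hbox j]
    have hp : xh - C.mulVec (F xh) + M.mulVec (yp - xh) ∈
        interior (Set.Icc lo hi) := hsub ⟨yp, hypmem, J, hJ, rfl⟩
    have hm : xh - C.mulVec (F xh) + M.mulVec (ym - xh) ∈
        interior (Set.Icc lo hi) := hsub ⟨ym, hymmem, J, hJ, rfl⟩
    rw [hint] at hp hm
    have hpi := (hp i (Set.mem_univ i)).2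
    have hmi := (hm i (Set.mem_univ i)).1
    have heval : ∀ v : Fin n → ℝ,
        (xh - C.mulVec (F xh) + M.mulVec v) i
          = (xh i - C.mulVec (F xh) i) + ∑ j, M i j * v j := by
      intro v
      simp [Matrix.mulVec, dotProduct]
    rw [heval] at hpi hmi
    have hsum : ∑ j, M i j * (yp j - xh j) - ∑ j, M i j * (ym j - xh j)
        = ∑ j, |M i j| * w j := by
      rw [← Finset.sum_sub_distrib]
      apply Finset.sum_congr rfl
      intro j _
      by_cases h : 0 ≤ M i j
      · rw [abs_of_nonneg h]
        simp only [hyp, hym, if_pos h, hwdef]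
        ring
      · rw [abs_of_neg (not_le.1 h)]
        simp only [hyp, hym, if_neg h, hwdef]
        ring
    simp only [Pi.sub_apply] at hpi hmi
    have hwi : w i = hi i - lo i := rfl
    linarith
  -- injectivity of C * J for J in the enclosure
  have hinj : ∀ J : Matrix (Fin n) (Fin n) ℝ,
      (∀ i j, Jlo i j ≤ J i j ∧ J i j ≤ Jhi i j) →
      ∀ u : Fin n → ℝ, (C * J).mulVec u = 0 → u = 0 := by
    intro J hJ u hu
    by_contra hne
    have hex : ∃ j, u j ≠ 0 := by
      by_contra h
      push_neg at h
      exact hne (funext h)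
    obtain ⟨j0, hj0⟩ := hex
    obtain ⟨i, -, hi_max⟩ := Finset.exists_max_image Finset.univ
      (fun k => |u k| / w k) ⟨j0, Finset.mem_univ j0⟩
    have himax : ∀ k, |u k| / w k ≤ |u i| / w i := fun k => hi_max k (Finset.mem_univ k)
    have hipos : 0 < |u i| / w i :=
      lt_of_lt_of_le (div_pos (abs_pos.2 hj0) (hwpos j0)) (himax j0)
    have hueq : (1 - C * J).mulVec u = u := by
      rw [Matrix.sub_mulVec, Matrix.one_mulVec, hu]
      simp
    have hle : |u i| ≤ (∑ j, |(1 - C * J) i j| * w j) * (|u i| / w i) := by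
      have h0 : u i = ∑ j, (1 - C * J) i j * u j := by
        conv_lhs => rw [← hueq]
        simp [Matrix.mulVec, dotProduct]
      calc |u i| = |∑ j, (1 - C * J) i j * u j| := by rw [← h0]
        _ ≤ ∑ j, |(1 - C * J) i j * u j| := Finset.abs_sum_le_sum_abs _ _
        _ = ∑ j, |(1 - C * J) i j| * |u j| := by simp [abs_mul]
        _ ≤ ∑ j, |(1 - C * J) i j| * (w j * (|u i| / w i)) := by
            apply Finset.sum_le_sum
            intro j _
            apply mul_le_mul_of_nonneg_left _ (abs_nonneg _)
            rw [← div_le_iff₀' (hwpos j)]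
            exact himax j
        _ = (∑ j, |(1 - C * J) i j| * w j) * (|u i| / w i) := by
            rw [Finset.sum_mul]
            apply Finset.sum_congr rfl
            intro j _
            ring
    have hlt : (∑ j, |(1 - C * J) i j| * w j) * (|u i| / w i) < w i * (|u i| / w i) :=
      mul_lt_mul_of_pos_right (hrow J hJ i) hipos
    have hfin : |u i| < w i * (|u i| / w i) := lt_of_le_of_lt hle hlt
    rw [mul_comm, div_mul_cancel₀ _ (ne_of_gt (hwpos i))] at hfin
    exact lt_irrefl _ hfin
  -- uniform contraction constant
  have hθex : ∃ θ : NNReal, θ < 1 ∧ ∀ J : Matrix (Fin n) (Fin n) ℝ,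
      (∀ i j, Jlo i j ≤ J i j ∧ J i j ≤ Jhi i j) →
      ∀ i, ∑ j, |(1 - C * J) i j| * w j ≤ (θ : ℝ) * w i := by
    have hScomp : IsCompact (Set.Icc (Matrix.of.symm Jlo) (Matrix.of.symm Jhi)) :=
      isCompact_Icc
    have hSne : (Set.Icc (Matrix.of.symm Jlo) (Matrix.of.symm Jhi)).Nonempty :=
      ⟨Matrix.of.symm Jlo, le_rfl, fun i j => hJloJhi i j⟩
    have key : ∀ i : Fin n, ∃ θi : ℝ, θi < 1 ∧ 0 ≤ θi ∧
        ∀ J : Matrix (Fin n) (Fin n) ℝ,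
        (∀ i' j, Jlo i' j ≤ J i' j ∧ J i' j ≤ Jhi i' j) →
        ∑ j, |(1 - C * J) i j| * w j ≤ θi * w i := by
      intro i
      have hcont : ContinuousOn
          (fun J : Fin n → Fin n → ℝ => ∑ j, |(1 - C * Matrix.of J) i j| * w j)
          (Set.Icc (Matrix.of.symm Jlo) (Matrix.of.symm Jhi)) := by
        apply Continuous.continuousOn
        apply continuous_finset_sum
        intro j _
        apply Continuous.mul _ continuous_const
        apply Continuous.abs
        have hh : (fun J : Fin n → Fin n → ℝ => (1 - C * Matrix.of J) i j)
            = fun J : Fin n → Fin n → ℝ =>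
              (1 : Matrix (Fin n) (Fin n) ℝ) i j - ∑ k, C i k * J k j := by
          funext J
          simp [Matrix.sub_apply, Matrix.mul_apply]
        rw [hh]
        exact continuous_const.sub (continuous_finset_sum _ fun k _ =>
          continuous_const.mul ((continuous_apply j).comp (continuous_apply k)))
      obtain ⟨J₀, hJ₀mem, hJ₀max⟩ := hScomp.exists_isMaxOn hSne hcont
      have hJ₀b : ∀ i' j, Jlo i' j ≤ Matrix.of J₀ i' j ∧ Matrix.of J₀ i' j ≤ Jhi i' j :=
        fun i' j => ⟨hJ₀mem.1 i' j, hJ₀mem.2 i' j⟩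
      set v : ℝ := ∑ j, |(1 - C * Matrix.of J₀) i j| * w j with hv
      have hvlt : v < w i := hrow (Matrix.of J₀) hJ₀b i
      have hvnn : 0 ≤ v := Finset.sum_nonneg fun j _ =>
        mul_nonneg (abs_nonneg _) (le_of_lt (hwpos j))
      refine ⟨v / w i, (div_lt_one (hwpos i)).2 hvlt,
        div_nonneg hvnn (le_of_lt (hwpos i)), ?_⟩
      intro J hJb
      have hmem : Matrix.of.symm J ∈
          Set.Icc (Matrix.of.symm Jlo) (Matrix.of.symm Jhi) :=
        ⟨fun i' j => (hJb i' j).1, fun i' j => (hJb i' j).2⟩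
      have hle := hJ₀max hmem
      have hle' : ∑ j, |(1 - C * J) i j| * w j ≤ v := hle
      rw [div_mul_cancel₀ _ (ne_of_gt (hwpos i))]
      exact hle'
    choose θi hθi1 hθi0 hθib using key
    refine ⟨Finset.univ.sup (fun i => (θi i).toNNReal), ?_, ?_⟩
    · rw [Finset.sup_lt_iff (by norm_num : (⊥ : NNReal) < 1)]
      intro i _
      exact Real.toNNReal_lt_one.2 (hθi1 i)
    · intro J hJ i
      refine (hθib i J hJ).trans (mul_le_mul_of_nonneg_right ?_ (le_of_lt (hwpos i)))
      have h1 : θi i ≤ ((θi i).toNNReal : ℝ) := Real.le_coe_toNNReal _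
      have h2 : ((θi i).toNNReal : ℝ)
          ≤ ((Finset.univ.sup fun i => (θi i).toNNReal : NNReal) : ℝ) :=
        NNReal.coe_le_coe.2 (Finset.le_sup (f := fun i => (θi i).toNNReal) (Finset.mem_univ i))
      exact h1.trans h2
  obtain ⟨θ, hθ1, hθb⟩ := hθex
  -- the scaled box
  set lo' : Fin n → ℝ := fun i => lo i / w i with hlo'
  set hi' : Fin n → ℝ := fun i => hi i / w i with hhi'
  have hlohi' : lo' ≤ hi' := fun i => (div_le_div_iff_of_pos_right (hwpos i)).2 (hbox i)
  haveI hne' : Nonempty (Set.Icc lo' hi') := ⟨⟨lo', le_rfl, hlohi'⟩⟩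
  haveI : CompleteSpace (Set.Icc lo' hi') := (isClosed_Icc).completeSpace_coe
  have hscale_mem : ∀ x : Set.Icc lo' hi', (fun j => w j * (x : Fin n → ℝ) j) ∈ Set.Icc lo hi := by
    intro x
    refine ⟨fun j => ?_, fun j => ?_⟩
    · have h : lo j / w j ≤ (x : Fin n → ℝ) j := x.2.1 j
      rw [div_le_iff₀ (hwpos j)] at h
      show lo j ≤ w j * (x : Fin n → ℝ) j
      linarith
    · have h : (x : Fin n → ℝ) j ≤ hi j / w j := x.2.2 j
      rw [le_div_iff₀ (hwpos j)] at h
      show w j * (x : Fin n → ℝ) j ≤ hi j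
      linarith
  have hgBox : ∀ y ∈ Set.Icc lo hi, g y ∈ Set.Icc lo hi := fun y hy =>
    interior_subset (hsub (hgK y hy))
  have hTmem : ∀ x : Set.Icc lo' hi',
      (fun i => g (fun j => w j * (x : Fin n → ℝ) j) i / w i) ∈ Set.Icc lo' hi' := by
    intro x
    have hg' := hgBox _ (hscale_mem x)
    constructor <;> intro i
    · exact (div_le_div_iff_of_pos_right (hwpos i)).2 (hg'.1 i)
    · exact (div_le_div_iff_of_pos_right (hwpos i)).2 (hg'.2 i)
  set T : Set.Icc lo' hi' → Set.Icc lo' hi' := fun x => ⟨_, hTmem x⟩ with hT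
  have hlip : LipschitzWith θ T := by
    rw [lipschitzWith_iff_dist_le_mul]
    intro x y
    rw [Subtype.dist_eq, Subtype.dist_eq]
    have hdnn : 0 ≤ (θ : ℝ) * dist (x : Fin n → ℝ) (y : Fin n → ℝ) :=
      mul_nonneg θ.2 dist_nonneg
    rw [dist_pi_le_iff hdnn]
    intro i
    set yx : Fin n → ℝ := fun j => w j * (x : Fin n → ℝ) j with hyx
    set yy : Fin n → ℝ := fun j => w j * (y : Fin n → ℝ) j with hyy
    obtain ⟨J, hJ, hJeq⟩ := hmvt yy (hscale_mem y) yx (hscale_mem x)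
    have hgdiff : g yx - g yy = (1 - C * J).mulVec (yx - yy) := by
      rw [Matrix.sub_mulVec, Matrix.one_mulVec, ← Matrix.mulVec_mulVec, ← hJeq,
        Matrix.mulVec_sub]
      show (yx - C.mulVec (F yx)) - (yy - C.mulVec (F yy)) = _
      abel
    have hdi : dist ((T x : Fin n → ℝ) i) ((T y : Fin n → ℝ) i)
        = |g yx i - g yy i| / w i := by
      show dist (g yx i / w i) (g yy i / w i) = _
      rw [Real.dist_eq, div_sub_div_same, abs_div, abs_of_pos (hwpos i)]
    rw [hdi, div_le_iff₀ (hwpos i)]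
    have hcomp : g yx i - g yy i = ∑ j, (1 - C * J) i j * (yx j - yy j) := by
      have := congrFun hgdiff i
      simp only [Pi.sub_apply] at this
      rw [this]
      simp [Matrix.mulVec, dotProduct]
    calc |g yx i - g yy i| = |∑ j, (1 - C * J) i j * (yx j - yy j)| := by rw [hcomp]
      _ ≤ ∑ j, |(1 - C * J) i j * (yx j - yy j)| := Finset.abs_sum_le_sum_abs _ _
      _ = ∑ j, |(1 - C * J) i j| * |yx j - yy j| := by simp [abs_mul]
      _ ≤ ∑ j, |(1 - C * J) i j| * (w j * dist (x : Fin n → ℝ) (y : Fin n → ℝ)) := by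
          apply Finset.sum_le_sum
          intro j _
          apply mul_le_mul_of_nonneg_left _ (abs_nonneg _)
          have h1 : |yx j - yy j| = w j * |(x : Fin n → ℝ) j - (y : Fin n → ℝ) j| := by
            rw [hyx, hyy]
            rw [← mul_sub, abs_mul, abs_of_pos (hwpos j)]
          rw [h1]
          apply mul_le_mul_of_nonneg_left _ (le_of_lt (hwpos j))
          rw [← Real.dist_eq]
          exact dist_le_pi_dist _ _ j
      _ = (∑ j, |(1 - C * J) i j| * w j) * dist (x : Fin n → ℝ) (y : Fin n → ℝ) := by
          rw [Finset.sum_mul]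
          apply Finset.sum_congr rfl
          intro j _
          ring
      _ ≤ ((θ : ℝ) * w i) * dist (x : Fin n → ℝ) (y : Fin n → ℝ) := by
          apply mul_le_mul_of_nonneg_right (hθb J hJ i) dist_nonneg
      _ = (θ : ℝ) * dist (x : Fin n → ℝ) (y : Fin n → ℝ) * w i := by ring
  have hcontr : ContractingWith θ T := ⟨hθ1, hlip⟩
  set xfix : Set.Icc lo' hi' := ContractingWith.fixedPoint T hcontr with hxfix
  have hfix : T xfix = xfix := hcontr.fixedPoint_isFixedPt
  set xs : Fin n → ℝ := fun j => w j * (xfix : Fin n → ℝ) j with hxs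
  have hxsmem : xs ∈ Set.Icc lo hi := hscale_mem xfix
  have hgxs : g xs = xs := by
    funext i
    have h := congrArg (fun z : Set.Icc lo' hi' => (z : Fin n → ℝ) i) hfix
    simp only [hT] at h
    have h' : g xs i / w i = (xfix : Fin n → ℝ) i := h
    have : g xs i = w i * (xfix : Fin n → ℝ) i := by
      rw [← h', mul_comm, div_mul_cancel₀ _ (ne_of_gt (hwpos i))]
    rw [this]
  have hCF : C.mulVec (F xs) = 0 := by
    have h : xs - C.mulVec (F xs) = xs := hgxs
    have := sub_eq_self.1 h
    exact this
  -- C is injective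
  have hCinj : ∀ v : Fin n → ℝ, C.mulVec v = 0 → v = 0 := by
    have hinjlin : Function.Injective (Matrix.toLin' (C * Jlo)) := by
      intro a b hab
      have h0 : (C * Jlo).mulVec (a - b) = 0 := by
        rw [Matrix.mulVec_sub]
        rw [Matrix.toLin'_apply, Matrix.toLin'_apply] at hab
        rw [hab]
        simp
      have := hinj Jlo (fun i j => ⟨le_rfl, hJloJhi i j⟩) (a - b) h0
      exact sub_eq_zero.1 this
    have hsurj : Function.Surjective (Matrix.toLin' (C * Jlo)) :=
      LinearMap.injective_iff_surjective.1 hinjlin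
    rw [Matrix.toLin'_mul] at hsurj
    rw [LinearMap.coe_comp] at hsurj
    have hCsurj : Function.Surjective (Matrix.toLin' C) := hsurj.of_comp
    have hCinjlin : Function.Injective (Matrix.toLin' C) :=
      LinearMap.injective_iff_surjective.2 hCsurj
    intro v hv
    have h : Matrix.toLin' C v = Matrix.toLin' C 0 := by
      rw [Matrix.toLin'_apply, Matrix.toLin'_apply, hv]
      simp
    simpa using hCinjlin h
  have hFxs : F xs = 0 := hCinj _ hCF
  refine ⟨xs, ⟨?_, hFxs⟩, ?_⟩
  · have h := hgK xs hxsmem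
    rwa [hgxs] at h
  · rintro x ⟨hxK, hFx⟩
    have hxB : x ∈ Set.Icc lo hi := interior_subset (hsub hxK)
    obtain ⟨J, hJ, hJeq⟩ := hmvt xs hxsmem x hxB
    have h0 : (C * J).mulVec (x - xs) = 0 := by
      rw [← Matrix.mulVec_mulVec, ← hJeq, hFx, hFxs]
      simp
    have := hinj J hJ _ h0
    exact sub_eq_zero.1 this
end

section
/- Let F : ℝʳ → ℝˢ be continuously differentiable with r > s, let q̂ ∈ ℝʳ, and let B ⊂ {1,…,r} with |B| = s be such that the submatrix F′_B(q̂) of the Jacobian formed by the columns indexed by B is invertible; let N be the complement of B. Let r₁, r₂ ≥ 0, K ≥ 0, and let [q] = { q : ‖q_B − q̂_B‖ ≤ r₁, ‖q_N − q̂_N‖ ≤ r₂ }. Assume ‖F′_B(q) − F′_B(q̂)‖ ≤ K‖q − q̂‖ for all q ∈ [q]. If for a given v ∈ ℝˢ, ‖F′_B(q̂)⁻¹(F(q̂) − v)‖ + ‖F′_B(q̂)⁻¹‖·( (1/2)·K·(r₁ + r₂)·r₁ + (sup_{q∈[q]} ‖F′_N(q)‖)·r₂ ) ≤ r₁, then there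 exists q* ∈ [q] with F(q*) = v. -/
open scoped Matrix.Norms.L2Operator

/-- Euclidean norm of a finite real vector. -/
noncomputable def eNorm {k : ℕ} (v : Fin k → ℝ) : ℝ :=
  Real.sqrt (∑ i, v i ^ 2)

/-- The Jacobian matrix of `F : ℝʳ → ℝˢ` at `z`. -/
noncomputable def jacMatrix {r s : ℕ} (F : (Fin r → ℝ) → (Fin s → ℝ))
    (z : Fin r → ℝ) : Matrix (Fin s) (Fin r) ℝ :=
  fun i j => fderiv ℝ F z (Pi.single j 1) i

lemma eNorm_eq {k : ℕ} (v : Fin k → ℝ) :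
    eNorm v = ‖(EuclideanSpace.equiv (Fin k) ℝ).symm v‖ := by
  simp [eNorm, EuclideanSpace.norm_eq, Real.norm_eq_abs, sq_abs]

lemma fderiv_mulVec {r s : ℕ} (F : (Fin r → ℝ) → (Fin s → ℝ)) (z w : Fin r → ℝ) :
    fderiv ℝ F z w = fun i => (jacMatrix F z).mulVec w i := by
  have hw : w = ∑ j, w j • (Pi.single j (1:ℝ) : Fin r → ℝ) := by
    funext x
    rw [Finset.sum_apply]
    simp [Pi.single_apply]
  conv_lhs => rw [hw, map_sum]
  funext i
  simp only [Finset.sum_apply, map_smul, Pi.smul_apply, smul_eq_mul]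
  simp [jacMatrix, Matrix.mulVec, dotProduct, mul_comm]

set_option maxHeartbeats 2000000

/-- existence of a solution of an underdetermined system
`F(q) = v` in the set `[q] = {q : ‖q_B − q̂_B‖ ≤ r₁, ‖q_N − q̂_N‖ ≤ r₂}`,
given invertibility of the `B`-columns of the Jacobian at `q̂`, a Lipschitz
bound on those columns, and the Krawczyk-type norm inequality. -/
theorem underdetermined_existence {r s t : ℕ} (hrs : r = s + t) (hst : s < r)
    (F : (Fin r → ℝ) → (Fin s → ℝ)) (hF : ContDiff ℝ 1 F)
    (qh : Fin r → ℝ)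
    (B : Fin s → Fin r) (N : Fin t → Fin r)
    (hB : Function.Injective B) (hN : Function.Injective N)
    (hdisj : Disjoint (Set.range B) (Set.range N))
    (hcover : Set.range B ∪ Set.range N = Set.univ)
    -- the `B`-columns of the Jacobian at `q̂`, and its inverse
    (FB : (Fin r → ℝ) → Matrix (Fin s) (Fin s) ℝ)
    (hFB : ∀ q, FB q = fun i j => jacMatrix F q i (B j))
    (FN : (Fin r → ℝ) → Matrix (Fin s) (Fin t) ℝ)
    (hFN : ∀ q, FN q = fun i j => jacMatrix F q i (N j))
    (hinv : IsUnit (FB qh).det)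
    (r₁ r₂ K : ℝ) (hr₁ : 0 ≤ r₁) (hr₂ : 0 ≤ r₂) (hK : 0 ≤ K)
    (box : Set (Fin r → ℝ))
    (hbox : box = { q | eNorm (fun j => q (B j) - qh (B j)) ≤ r₁ ∧
                        eNorm (fun j => q (N j) - qh (N j)) ≤ r₂ })
    (hLip : ∀ q ∈ box, ‖FB q - FB qh‖ ≤ K * eNorm (q - qh))
    (v : Fin s → ℝ)
    (hineq : eNorm ((FB qh)⁻¹.mulVec (F qh - v)) +
        ‖(FB qh)⁻¹‖ * (1 / 2 * K * (r₁ + r₂) * r₁ +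
          (⨆ q ∈ box, ‖FN q‖) * r₂) ≤ r₁) :
    ∃ qstar ∈ box, F qstar = v := by
  classical
  -- the bijection between `Fin s ⊕ Fin t` and `Fin r`
  have hbij : Function.Bijective (Sum.elim B N) := by
    constructor
    · intro a b hab
      cases a with
      | inl i =>
        cases b with
        | inl j => exact congrArg Sum.inl (hB hab)
        | inr j =>
          simp only [Sum.elim_inl, Sum.elim_inr] at hab
          exact absurd (Set.mem_range_self j)
            (Set.disjoint_left.1 hdisj (hab ▸ Set.mem_range_self i))
      | inr i =>
        cases b with
        | inl j =>
          simp only [Sum.elim_inl, Sum.elim_inr] at hab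
          exact absurd (Set.mem_range_self j)
            (Set.disjoint_left.1 hdisj.symm (hab ▸ Set.mem_range_self i))
        | inr j => exact congrArg Sum.inr (hN hab)
    · intro j
      have hj : j ∈ Set.range B ∪ Set.range N := hcover ▸ Set.mem_univ j
      rcases hj with ⟨i, rfl⟩ | ⟨i, rfl⟩
      exacts [⟨Sum.inl i, rfl⟩, ⟨Sum.inr i, rfl⟩]
  set e : (Fin s ⊕ Fin t) ≃ Fin r := Equiv.ofBijective _ hbij with he
  have heB : ∀ k, e (Sum.inl k) = B k := fun _ => rfl
  have heN : ∀ k, e (Sum.inr k) = N k := fun _ => rfl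
  have hesymmB : ∀ k, e.symm (B k) = Sum.inl k := fun k => by
    rw [← heB k, Equiv.symm_apply_apply]
  have hesymmN : ∀ k, e.symm (N k) = Sum.inr k := fun k => by
    rw [← heN k, Equiv.symm_apply_apply]
  have hsplit : ∀ f : Fin r → ℝ, ∑ j, f j = (∑ i, f (B i)) + ∑ i, f (N i) := by
    intro f
    rw [← Equiv.sum_comp e f, Fintype.sum_sum_type]
    rfl
  set L := (EuclideanSpace.equiv (Fin s) ℝ).symm with hLdef
  set A := FB qh with hA
  set Ai := (FB qh)⁻¹ with hAi
  have hAiA : Ai * A = 1 := Matrix.nonsing_inv_mul _ hinv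
  have hAAi : A * Ai = 1 := Matrix.mul_nonsing_inv _ hinv
  -- the embedding of the B-slice
  set ι : EuclideanSpace ℝ (Fin s) → (Fin r → ℝ) :=
    fun x j => Sum.elim x (fun i => qh (N i)) (e.symm j) with hι
  set bE : EuclideanSpace ℝ (Fin s) := L (fun i => qh (B i)) with hbE
  have hbEa : ∀ i, bE i = qh (B i) := fun _ => rfl
  have hιB : ∀ (x : EuclideanSpace ℝ (Fin s)) i, ι x (B i) = x i := by
    intro x i; simp only [hι, hesymmB, Sum.elim_inl]
  have hιN : ∀ (x : EuclideanSpace ℝ (Fin s)) i, ι x (N i) = qh (N i) := by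
    intro x i; simp only [hι, hesymmN, Sum.elim_inr]
  have hιqh : ι bE = qh := by
    funext j
    obtain ⟨u, rfl⟩ := e.surjective j
    cases u with
    | inl k => rw [heB, hιB, hbEa]
    | inr k => rw [heN, hιN]
  -- Euclidean norm of slice differences
  have heNorm : ∀ x : EuclideanSpace ℝ (Fin s), eNorm (ι x - qh) = ‖x - bE‖ := by
    intro x
    rw [eNorm, EuclideanSpace.norm_eq]
    congr 1
    rw [hsplit]
    have h1 : ∀ i, (ι x - qh) (B i) = x i - bE i := by
      intro i; simp [hιB, hbEa]
    have h2 : ∀ i, (ι x - qh) (N i) = 0 := by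
      intro i; simp [hιN]
    simp only [h1, h2]
    simp [Real.norm_eq_abs, sq_abs, PiLp.sub_apply]
  have hmem : ∀ x : EuclideanSpace ℝ (Fin s), ‖x - bE‖ ≤ r₁ → ι x ∈ box := by
    intro x hx
    rw [hbox]
    constructor
    · have : (fun j => ι x (B j) - qh (B j)) = (fun j => (ι x - qh) (B j)) := by
        funext j; simp
      rw [this]
      have : eNorm (fun j => (ι x - qh) (B j)) ≤ eNorm (ι x - qh) := by
        rw [eNorm, eNorm]
        apply Real.sqrt_le_sqrt
        rw [hsplit (fun j => (ι x - qh) j ^ 2)]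
        have : (0:ℝ) ≤ ∑ i, (ι x - qh) (N i) ^ 2 :=
          Finset.sum_nonneg fun _ _ => sq_nonneg _
        linarith
      calc eNorm (fun j => (ι x - qh) (B j)) ≤ eNorm (ι x - qh) := this
        _ = ‖x - bE‖ := heNorm x
        _ ≤ r₁ := hx
    · have : (fun j => ι x (N j) - qh (N j)) = (fun _ : Fin t => (0:ℝ)) := by
        funext j; simp [hιN]
      rw [this]
      have : eNorm (fun _ : Fin t => (0:ℝ)) = 0 := by simp [eNorm]
      rw [this]; exact hr₂
  -- directional derivative in B-directions
  have hdirB : ∀ (z : Fin r → ℝ) (Δ : Fin s → ℝ),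
      fderiv ℝ F z (fun j => Sum.elim Δ (fun _ => (0:ℝ)) (e.symm j)) =
        (FB z).mulVec Δ := by
    intro z Δ
    rw [fderiv_mulVec]
    funext i
    show (jacMatrix F z).mulVec _ i = (FB z).mulVec Δ i
    simp only [Matrix.mulVec, dotProduct]
    rw [hsplit (fun j => jacMatrix F z i j * Sum.elim Δ (fun _ => (0:ℝ)) (e.symm j))]
    simp only [hesymmB, hesymmN, Sum.elim_inl, Sum.elim_inr, mul_zero,
      Finset.sum_const_zero, add_zero, hFB]
  -- mean value estimate
  have hMV : ∀ x y : EuclideanSpace ℝ (Fin s), ‖x - bE‖ ≤ r₁ → ‖y - bE‖ ≤ r₁ →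
      ‖L (F (ι x)) - L (F (ι y)) - L (A.mulVec (fun i => x i - y i))‖ ≤
        K * ((‖x - bE‖ + ‖y - bE‖) / 2) * ‖x - y‖ := by
    intro x y hx hy
    set d : Fin s → ℝ := fun i => x i - y i with hd
    set wv : Fin r → ℝ := fun j => Sum.elim d (fun _ => (0:ℝ)) (e.symm j) with hwv
    set p : ℝ → Fin r → ℝ := fun τ => ι y + τ • wv with hp
    have hpt : ∀ τ : ℝ, p τ = ι (y + τ • (x - y)) := by
      intro τ
      funext j
      obtain ⟨u, rfl⟩ := e.surjective j
      cases u with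
      | inl k =>
        rw [heB]
        simp only [hp, Pi.add_apply, Pi.smul_apply, smul_eq_mul, hιB, hwv, hesymmB,
          Sum.elim_inl, hd]
        have : (y + τ • (x - y)) k = y k + τ * (x k - y k) := by
          simp [PiLp.add_apply, PiLp.smul_apply, PiLp.sub_apply]
        rw [this]
      | inr k =>
        rw [heN]
        simp only [hp, Pi.add_apply, Pi.smul_apply, smul_eq_mul, hιN, hwv, hesymmN,
          Sum.elim_inr, mul_zero, add_zero]
    have hp0 : p 0 = ι y := by rw [hpt]; congr 1; simp
    have hp1 : p 1 = ι x := by rw [hpt]; congr 1; simp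
    have hseg : ∀ τ ∈ Set.Icc (0:ℝ) 1,
        ‖(y + τ • (x - y)) - bE‖ ≤ (1 - τ) * ‖y - bE‖ + τ * ‖x - bE‖ := by
      intro τ hτ
      have hrw : (y + τ • (x - y)) - bE = (1 - τ) • (y - bE) + τ • (x - bE) := by
        module
      rw [hrw]
      calc ‖(1 - τ) • (y - bE) + τ • (x - bE)‖
          ≤ ‖(1 - τ) • (y - bE)‖ + ‖τ • (x - bE)‖ := norm_add_le _ _
        _ = (1 - τ) * ‖y - bE‖ + τ * ‖x - bE‖ := by
            rw [norm_smul, norm_smul, Real.norm_eq_abs, Real.norm_eq_abs,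
              abs_of_nonneg (by linarith [hτ.2] : (0:ℝ) ≤ 1 - τ),
              abs_of_nonneg hτ.1]
    have hsegr : ∀ τ ∈ Set.Icc (0:ℝ) 1, ‖(y + τ • (x - y)) - bE‖ ≤ r₁ := by
      intro τ hτ
      calc ‖(y + τ • (x - y)) - bE‖ ≤ (1 - τ) * ‖y - bE‖ + τ * ‖x - bE‖ := hseg τ hτ
        _ ≤ (1 - τ) * r₁ + τ * r₁ := by
            have h1 : (0:ℝ) ≤ 1 - τ := by linarith [hτ.2]
            have h2 : (0:ℝ) ≤ τ := hτ.1
            gcongr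
        _ = r₁ := by ring
    -- derivative of the path composition
    set ψ : ℝ → EuclideanSpace ℝ (Fin s) := fun τ => L (F (p τ)) with hψdef
    set ψ' : ℝ → EuclideanSpace ℝ (Fin s) := fun τ => L ((FB (p τ)).mulVec d) with hψ'def
    have hψ : ∀ τ : ℝ, HasDerivAt ψ (ψ' τ) τ := by
      intro τ
      have h1 : HasDerivAt p wv τ := by
        have := ((hasDerivAt_id τ).smul_const wv).const_add (ι y)
        simpa [hp, one_smul] using this
      have h2 : HasFDerivAt F (fderiv ℝ F (p τ)) (p τ) :=
        (hF.differentiable one_ne_zero (p τ)).hasFDerivAt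
      have h3 : HasDerivAt (fun τ => F (p τ)) (fderiv ℝ F (p τ) wv) τ :=
        h2.comp_hasDerivAt τ h1
      have h4 : HasDerivAt (fun τ => L (F (p τ)))
          ((L : (Fin s → ℝ) →L[ℝ] EuclideanSpace ℝ (Fin s)) (fderiv ℝ F (p τ) wv)) τ :=
        ((L : (Fin s → ℝ) →L[ℝ] EuclideanSpace ℝ (Fin s)).hasFDerivAt).comp_hasDerivAt τ h3
      have h5 : fderiv ℝ F (p τ) wv = (FB (p τ)).mulVec d := hdirB (p τ) d
      rw [h5] at h4
      exact h4
    have hFBcont : Continuous fun τ : ℝ => (FB (p τ)).mulVec d := by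
      have hpc : Continuous p := by
        apply continuous_const.add
        exact (continuous_id.smul continuous_const)
      apply continuous_pi
      intro i
      simp only [Matrix.mulVec, dotProduct]
      apply continuous_finset_sum
      intro k _
      apply Continuous.mul _ continuous_const
      have hfd : Continuous (fderiv ℝ F) := hF.continuous_fderiv one_ne_zero
      have : Continuous fun τ : ℝ => fderiv ℝ F (p τ) := hfd.comp hpc
      have happ : Continuous fun τ : ℝ => fderiv ℝ F (p τ) (Pi.single (B k) 1) :=
        this.clm_apply continuous_const
      simp only [hFB, jacMatrix]
      exact (continuous_apply i).comp happ
    have hψ'cont : Continuous ψ' := by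
      rw [hψ'def]
      exact (L : (Fin s → ℝ) →L[ℝ] EuclideanSpace ℝ (Fin s)).continuous.comp hFBcont
    have hFTC : ∫ τ in (0:ℝ)..1, ψ' τ = ψ 1 - ψ 0 :=
      intervalIntegral.integral_eq_sub_of_hasDerivAt (fun τ _ => hψ τ)
        (hψ'cont.intervalIntegrable 0 1)
    have hmulVec_norm : ∀ (M : Matrix (Fin s) (Fin s) ℝ) (u : Fin s → ℝ),
        ‖L (M.mulVec u)‖ ≤ ‖M‖ * ‖L u‖ := by
      intro M u
      rw [hLdef]
      exact Matrix.l2_opNorm_mulVec M ((EuclideanSpace.equiv (Fin s) ℝ).symm u)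
    have hLd : L d = x - y := by rw [hLdef]; rfl
    have hψ10 : ψ 1 - ψ 0 = L (F (ι x)) - L (F (ι y)) := by
      rw [hψdef]
      simp only [hp1, hp0]
    set cx := ‖x - bE‖ with hcx
    set cy := ‖y - bE‖ with hcy
    set g : ℝ → ℝ := fun τ => K * ((1 - τ) * cy + τ * cx) * ‖x - y‖ with hg
    have hgcont : Continuous g := by fun_prop
    have hsub : L (F (ι x)) - L (F (ι y)) - L (A.mulVec d) =
        ∫ τ in (0:ℝ)..1, (ψ' τ - L (A.mulVec d)) := by
      rw [intervalIntegral.integral_sub (hψ'cont.intervalIntegrable 0 1)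
        intervalIntegrable_const, hFTC, hψ10]
      simp
    rw [hsub]
    have hptw : ∀ τ ∈ Set.Icc (0:ℝ) 1, ‖ψ' τ - L (A.mulVec d)‖ ≤ g τ := by
      intro τ hτ
      have h1 : ψ' τ - L (A.mulVec d) = L ((FB (p τ) - A).mulVec d) := by
        rw [hψ'def]
        simp only [Matrix.sub_mulVec, map_sub]
      rw [h1]
      have h2 : ‖L ((FB (p τ) - A).mulVec d)‖ ≤ ‖FB (p τ) - A‖ * ‖L d‖ :=
        hmulVec_norm _ _
      have h3 : ‖FB (p τ) - A‖ ≤ K * ((1 - τ) * cy + τ * cx) := by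
        have hbm : p τ ∈ box := by
          rw [hpt]
          exact hmem _ (hsegr τ hτ)
        have := hLip (p τ) hbm
        calc ‖FB (p τ) - A‖ ≤ K * eNorm (p τ - qh) := this
          _ = K * ‖(y + τ • (x - y)) - bE‖ := by rw [hpt, heNorm]
          _ ≤ K * ((1 - τ) * cy + τ * cx) := by
              have := hseg τ hτ
              have h4 : (1 - τ) * ‖y - bE‖ + τ * ‖x - bE‖ = (1 - τ) * cy + τ * cx := by
                rw [hcx, hcy]
              rw [h4] at this
              exact mul_le_mul_of_nonneg_left this hK
      calc ‖L ((FB (p τ) - A).mulVec d)‖ ≤ ‖FB (p τ) - A‖ * ‖L d‖ := h2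
        _ = ‖FB (p τ) - A‖ * ‖x - y‖ := by rw [hLd]
        _ ≤ (K * ((1 - τ) * cy + τ * cx)) * ‖x - y‖ :=
            mul_le_mul_of_nonneg_right h3 (norm_nonneg _)
        _ = g τ := by rw [hg]
    have hbound : ‖∫ τ in (0:ℝ)..1, (ψ' τ - L (A.mulVec d))‖ ≤
        |∫ τ in (0:ℝ)..1, g τ| := by
      apply intervalIntegral.norm_integral_le_abs_of_norm_le
      · filter_upwards [MeasureTheory.ae_restrict_mem measurableSet_uIoc] with τ hτ
        apply hptw
        rw [Set.uIoc_of_le (zero_le_one : (0:ℝ) ≤ 1)] at hτ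
        exact Set.mem_Icc_of_Ioc hτ
      · exact hgcont.intervalIntegrable 0 1
    have hgval : ∫ τ in (0:ℝ)..1, g τ = K * ((cx + cy) / 2) * ‖x - y‖ := by
      have hgrw : g = fun τ => K * cy * ‖x - y‖ + τ * (K * (cx - cy) * ‖x - y‖) := by
        funext τ; rw [hg]; ring
      rw [hgrw]
      beta_reduce
      have h1 : IntervalIntegrable (fun _ : ℝ => K * cy * ‖x - y‖)
          MeasureTheory.volume 0 1 := intervalIntegrable_const
      have h2 : IntervalIntegrable (fun τ : ℝ => τ * (K * (cx - cy) * ‖x - y‖))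
          MeasureTheory.volume 0 1 := Continuous.intervalIntegrable (by fun_prop) 0 1
      rw [intervalIntegral.integral_add h1 h2]
      simp only [intervalIntegral.integral_const, intervalIntegral.integral_mul_const,
        integral_id, smul_eq_mul]
      ring
    calc ‖∫ τ in (0:ℝ)..1, (ψ' τ - L (A.mulVec d))‖ ≤ |∫ τ in (0:ℝ)..1, g τ| := hbound
      _ = K * ((cx + cy) / 2) * ‖x - y‖ := by
          rw [hgval, abs_of_nonneg]
          positivity
      _ = K * ((‖x - bE‖ + ‖y - bE‖) / 2) * ‖x - y‖ := by rw [hcx, hcy]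
  -- global norm bound for mulVec through L
  have hmulVecN : ∀ (M : Matrix (Fin s) (Fin s) ℝ) (u : Fin s → ℝ),
      ‖L (M.mulVec u)‖ ≤ ‖M‖ * ‖L u‖ := by
    intro M u
    rw [hLdef]
    exact Matrix.l2_opNorm_mulVec M ((EuclideanSpace.equiv (Fin s) ℝ).symm u)
  have hAiAmul : ∀ u : Fin s → ℝ, Ai.mulVec (A.mulVec u) = u := by
    intro u; rw [Matrix.mulVec_mulVec, hAiA, Matrix.one_mulVec]
  have hAAimul : ∀ u : Fin s → ℝ, A.mulVec (Ai.mulVec u) = u := by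
    intro u; rw [Matrix.mulVec_mulVec, hAAi, Matrix.one_mulVec]
  set Φ : (Fin s → ℝ) → EuclideanSpace ℝ (Fin s) → EuclideanSpace ℝ (Fin s) :=
    fun w x => x - L (Ai.mulVec (F (ι x) - w)) with hΦ
  have hΦdiff : ∀ (w : Fin s → ℝ) (x y : EuclideanSpace ℝ (Fin s)),
      Φ w x - Φ w y =
        -(L (Ai.mulVec (F (ι x) - F (ι y) - A.mulVec (fun i => x i - y i)))) := by
    intro w x y
    have h1 : L (Ai.mulVec (A.mulVec (fun i => x i - y i))) = x - y := by
      rw [hAiAmul, hLdef]; rfl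
    rw [hΦ]
    beta_reduce
    rw [show F (ι x) - F (ι y) - A.mulVec (fun i => x i - y i) =
        (F (ι x) - w) - (F (ι y) - w) - A.mulVec (fun i => x i - y i) by abel]
    simp only [Matrix.mulVec_sub, map_sub, h1]
    abel
  set β := ‖Ai‖ * K with hβdef
  have hβ0 : 0 ≤ β := mul_nonneg (norm_nonneg _) hK
  have hcontr : ∀ (w : Fin s → ℝ) (x y : EuclideanSpace ℝ (Fin s)),
      ‖x - bE‖ ≤ r₁ → ‖y - bE‖ ≤ r₁ →
      ‖Φ w x - Φ w y‖ ≤ β * ((‖x - bE‖ + ‖y - bE‖) / 2) * ‖x - y‖ := by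
    intro w x y hx hy
    rw [hΦdiff, norm_neg]
    have h2 : ‖L (F (ι x) - F (ι y) - A.mulVec (fun i => x i - y i))‖ =
        ‖L (F (ι x)) - L (F (ι y)) - L (A.mulVec (fun i => x i - y i))‖ := by
      rw [map_sub, map_sub]
    calc ‖L (Ai.mulVec (F (ι x) - F (ι y) - A.mulVec (fun i => x i - y i)))‖
        ≤ ‖Ai‖ * ‖L (F (ι x) - F (ι y) - A.mulVec (fun i => x i - y i))‖ := hmulVecN _ _
      _ ≤ ‖Ai‖ * (K * ((‖x - bE‖ + ‖y - bE‖) / 2) * ‖x - y‖) := by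
          rw [h2]
          exact mul_le_mul_of_nonneg_left (hMV x y hx hy) (norm_nonneg _)
      _ = β * ((‖x - bE‖ + ‖y - bE‖) / 2) * ‖x - y‖ := by rw [hβdef]; ring
  have hLinj : ∀ u : Fin s → ℝ, L u = 0 → u = 0 := by
    intro u hu
    exact L.injective (by rw [hu, map_zero])
  have hfixsol : ∀ (w : Fin s → ℝ) (x : EuclideanSpace ℝ (Fin s)),
      Function.IsFixedPt (Φ w) x → F (ι x) = w := by
    intro w x hfix
    have hfix' : x - L (Ai.mulVec (F (ι x) - w)) = x := by
      have := hfix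
      rw [Function.IsFixedPt, hΦ] at this
      exact this
    have h0 : L (Ai.mulVec (F (ι x) - w)) = 0 := by
      have h := sub_eq_self.mp hfix'
      exact h
    have h1 : Ai.mulVec (F (ι x) - w) = 0 := hLinj _ h0
    have h2 : F (ι x) - w = 0 := by
      have h := congrArg A.mulVec h1
      rwa [hAAimul, Matrix.mulVec_zero] at h
    exact sub_eq_zero.mp h2
  set η := ‖L (Ai.mulVec (F qh - v))‖ with hηdef
  have hηeq : eNorm (Ai.mulVec (F qh - v)) = η := by rw [hηdef, hLdef, eNorm_eq]
  set S := (⨆ q ∈ box, ‖FN q‖) with hSdef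
  have hS0 : 0 ≤ S := Real.iSup_nonneg fun q => Real.iSup_nonneg fun _ => norm_nonneg _
  rw [hηeq] at hineq
  have hkey : η + β / 2 * (r₁ * r₁) ≤ r₁ := by
    have hx1 : 0 ≤ ‖Ai‖ * (K * (r₂ * r₁)) :=
      mul_nonneg (norm_nonneg _) (mul_nonneg hK (mul_nonneg hr₂ hr₁))
    have hx2 : 0 ≤ ‖Ai‖ * (S * r₂) :=
      mul_nonneg (norm_nonneg _) (mul_nonneg hS0 hr₂)
    nlinarith [hineq]
  clear_value L A Ai ι bE Φ β η S
  by_cases hη0 : η = 0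
  · -- qh itself solves the system
    have hη0' : ‖L (Ai.mulVec (F qh - v))‖ = 0 := by rw [← hηdef]; exact hη0
    have h1 : Ai.mulVec (F qh - v) = 0 := hLinj _ (norm_eq_zero.mp hη0')
    have h2 : F qh = v := by
      have h := congrArg A.mulVec h1
      rw [hAAimul, Matrix.mulVec_zero] at h
      exact sub_eq_zero.mp h
    refine ⟨qh, ?_, h2⟩
    rw [hbox]
    simp only [Set.mem_setOf_eq, sub_self]
    constructor
    · have hz : eNorm (fun _ : Fin s => (0:ℝ)) = 0 := by simp [eNorm]
      rw [hz]; exact hr₁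
    · have hz : eNorm (fun _ : Fin t => (0:ℝ)) = 0 := by simp [eNorm]
      rw [hz]; exact hr₂
  · have hηpos : 0 < η := by
      have hnn := norm_nonneg (L (Ai.mulVec (F qh - v)))
      rw [← hηdef] at hnn
      exact lt_of_le_of_ne hnn (Ne.symm hη0)
    have hr₁pos : 0 < r₁ := by
      have h0 : 0 ≤ β / 2 * (r₁ * r₁) :=
        mul_nonneg (div_nonneg hβ0 (by norm_num)) (mul_nonneg hr₁ hr₁)
      linarith only [hkey, hηpos, h0]
    -- main solving step, for targets strictly closer than v
    have SOLVE : ∀ w : Fin s → ℝ, ‖L (Ai.mulVec (F qh - w))‖ < η →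
        ∃ x : EuclideanSpace ℝ (Fin s), ‖x - bE‖ ≤ r₁ ∧ F (ι x) = w := by
      intro w hw
      set η' := ‖L (Ai.mulVec (F qh - w))‖ with hη'def
      have hη'0 : 0 ≤ η' := norm_nonneg _
      obtain ⟨ρ, hρ0, hρr, hρc, hρs⟩ :
          ∃ ρ : ℝ, 0 ≤ ρ ∧ ρ ≤ r₁ ∧ β * ρ < 1 ∧ η' + β / 2 * (ρ * ρ) ≤ ρ := by
        rcases lt_or_ge (β * r₁) 1 with h | h
        · exact ⟨r₁, hr₁, le_rfl, h, by nlinarith⟩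
        · have hβpos : 0 < β := by nlinarith
          set D := 1 - 2 * β * η' with hDdef
          have hDgt : (1 - β * r₁) ^ 2 < D := by
            nlinarith [mul_lt_mul_of_pos_left hw hβpos]
          have hD0 : 0 < D := lt_of_le_of_lt (sq_nonneg _) hDgt
          have hD1 : D ≤ 1 := by nlinarith
          set sD := Real.sqrt D with hsDdef
          have hsDsq : sD ^ 2 = D := Real.sq_sqrt hD0.le
          have hsDpos : 0 < sD := Real.sqrt_pos.2 hD0
          have hsD1 : sD ≤ 1 := by
            rw [hsDdef, show (1:ℝ) = Real.sqrt 1 by rw [Real.sqrt_one]]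
            exact Real.sqrt_le_sqrt hD1
          have hsDgt : β * r₁ - 1 < sD := by
            have h5 : Real.sqrt ((1 - β * r₁) ^ 2) < sD := Real.sqrt_lt_sqrt (sq_nonneg _) hDgt
            rw [Real.sqrt_sq_eq_abs] at h5
            calc β * r₁ - 1 ≤ |1 - β * r₁| := by rw [abs_sub_comm]; exact le_abs_self _
              _ < sD := h5
          refine ⟨(1 - sD) / β, div_nonneg (by linarith) hβpos.le, ?_, ?_, ?_⟩
          · rw [div_le_iff₀ hβpos]; nlinarith
          · rw [mul_comm, div_mul_cancel₀ _ hβpos.ne']; linarith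
          · have heq : η' + β / 2 * (((1 - sD) / β) * ((1 - sD) / β)) = (1 - sD) / β := by
              field_simp
              nlinarith [hsDsq]
            exact le_of_eq heq
      -- Banach fixed point on the closed ball of radius ρ
      set Sball := Metric.closedBall bE ρ with hSball
      have hbEball : bE ∈ Sball := Metric.mem_closedBall_self hρ0
      have hball_norm : ∀ z : EuclideanSpace ℝ (Fin s), z ∈ Sball ↔ ‖z - bE‖ ≤ ρ := by
        intro z; rw [hSball, Metric.mem_closedBall, dist_eq_norm]
      have hΦbE : ‖Φ w bE - bE‖ = η' := by
        rw [hΦ]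
        beta_reduce
        rw [hιqh, sub_sub_cancel_left, norm_neg]
      have hmaps : Set.MapsTo (Φ w) Sball Sball := by
        intro z hz
        rw [hball_norm] at hz ⊢
        have h1 : ‖Φ w z - Φ w bE‖ ≤ β * ((‖z - bE‖ + ‖bE - bE‖) / 2) * ‖z - bE‖ :=
          hcontr w z bE (le_trans hz hρr) (by simp [hr₁])
        rw [sub_self, norm_zero, add_zero] at h1
        have h2 : ‖Φ w z - bE‖ ≤ ‖Φ w z - Φ w bE‖ + ‖Φ w bE - bE‖ := by
          have := dist_triangle (Φ w z) (Φ w bE) bE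
          rwa [dist_eq_norm, dist_eq_norm, dist_eq_norm] at this
        have h3 : β * (‖z - bE‖ / 2) * ‖z - bE‖ ≤ β / 2 * (ρ * ρ) := by
          nlinarith [mul_le_mul_of_nonneg_left (mul_le_mul hz hz (norm_nonneg (z - bE)) hρ0) hβ0]
        calc ‖Φ w z - bE‖ ≤ ‖Φ w z - Φ w bE‖ + ‖Φ w bE - bE‖ := h2
          _ ≤ β * (‖z - bE‖ / 2) * ‖z - bE‖ + η' := by
              rw [hΦbE]; exact add_le_add_left h1 _
          _ ≤ β / 2 * (ρ * ρ) + η' := add_le_add_left h3 _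
          _ ≤ ρ := by linarith
      have hcomplete : IsComplete Sball := Metric.isClosed_closedBall.isComplete
      set cK : NNReal := Real.toNNReal (β * ρ) with hcKdef
      have hcKr : (cK : ℝ) = β * ρ := Real.coe_toNNReal _ (mul_nonneg hβ0 hρ0)
      have hc1 : cK < 1 := by
        rw [← NNReal.coe_lt_coe, hcKr, NNReal.coe_one]; exact hρc
      have hlip : LipschitzWith cK (hmaps.restrict (Φ w) Sball Sball) := by
        apply LipschitzWith.of_dist_le_mul
        rintro ⟨a1, ha1⟩ ⟨b1, hb1⟩
        have ha1' : ‖a1 - bE‖ ≤ ρ := (hball_norm a1).mp ha1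
        have hb1' : ‖b1 - bE‖ ≤ ρ := (hball_norm b1).mp hb1
        have h1 := hcontr w a1 b1 (le_trans ha1' hρr) (le_trans hb1' hρr)
        have h2 : β * ((‖a1 - bE‖ + ‖b1 - bE‖) / 2) * ‖a1 - b1‖ ≤ (β * ρ) * ‖a1 - b1‖ := by
          apply mul_le_mul_of_nonneg_right _ (norm_nonneg _)
          have h3 : (‖a1 - bE‖ + ‖b1 - bE‖) / 2 ≤ ρ := by linarith
          exact mul_le_mul_of_nonneg_left h3 hβ0
        show dist _ _ ≤ (cK : ℝ) * dist _ _
        rw [Subtype.dist_eq, Subtype.dist_eq]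
        simp only [Set.MapsTo.val_restrict_apply]
        rw [dist_eq_norm, dist_eq_norm, hcKr]
        exact le_trans h1 h2
      obtain ⟨z, hzS, hzfix, -, -⟩ :=
        ContractingWith.exists_fixedPoint' hcomplete hmaps ⟨hc1, hlip⟩ hbEball (edist_ne_top _ _)
      exact ⟨z, le_trans ((hball_norm z).mp hzS) hρr, hfixsol w z hzfix⟩
    -- approximating targets and passing to the limit
    set wseq : ℕ → Fin s → ℝ := fun n => F qh + ((n : ℝ) / (n + 1)) • (v - F qh) with hwseq
    have hwlt : ∀ n, ‖L (Ai.mulVec (F qh - wseq n))‖ < η := by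
      intro n
      have hc0 : 0 ≤ (n : ℝ) / (n + 1) := by positivity
      have hc1 : (n : ℝ) / (n + 1) < 1 := by
        rw [div_lt_one (by positivity)]
        have := Nat.cast_nonneg (α := ℝ) n; linarith
      have h1 : F qh - wseq n = ((n : ℝ) / (n + 1)) • (F qh - v) := by
        rw [hwseq]
        beta_reduce
        module
      rw [h1, Matrix.mulVec_smul, map_smul, norm_smul, Real.norm_eq_abs, abs_of_nonneg hc0,
        ← hηdef]
      exact mul_lt_of_lt_one_left hηpos hc1
    choose xs hxs hFxs using fun n => SOLVE (wseq n) (hwlt n)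
    have hcpt : IsCompact (Metric.closedBall bE r₁) := isCompact_closedBall bE r₁
    have hxsmem : ∀ n, xs n ∈ Metric.closedBall bE r₁ := by
      intro n; rw [Metric.mem_closedBall, dist_eq_norm]; exact hxs n
    obtain ⟨a, haball, σ, hσ, hlim⟩ := hcpt.tendsto_subseq hxsmem
    have hcont : Continuous fun z : EuclideanSpace ℝ (Fin s) => F (ι z) := by
      apply hF.continuous.comp
      apply continuous_pi
      intro j
      rw [hι]
      beta_reduce
      cases h : e.symm j with
      | inl k =>
        simp only [h, Sum.elim_inl]
        exact (EuclideanSpace.proj k : EuclideanSpace ℝ (Fin s) →L[ℝ] ℝ).continuous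
      | inr k =>
        simp only [h, Sum.elim_inr]
        exact continuous_const
    have htendF : Filter.Tendsto (fun n => F (ι (xs (σ n)))) Filter.atTop (nhds (F (ι a))) :=
      (hcont.tendsto a).comp hlim
    have htendw : Filter.Tendsto wseq Filter.atTop (nhds v) := by
      have h1 : Filter.Tendsto (fun n : ℕ => ((n : ℝ) / (n + 1))) Filter.atTop (nhds 1) :=
        tendsto_natCast_div_add_atTop (1 : ℝ)
      have h2 := (h1.smul_const (v - F qh)).const_add (F qh)
      have h3 : F qh + (1 : ℝ) • (v - F qh) = v := by module
      rw [h3] at h2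
      exact h2
    have htendw2 : Filter.Tendsto (fun n => wseq (σ n)) Filter.atTop (nhds v) :=
      htendw.comp hσ.tendsto_atTop
    have heqfn : (fun n => F (ι (xs (σ n)))) = fun n => wseq (σ n) :=
      funext fun n => hFxs (σ n)
    rw [heqfn] at htendF
    have hfa : F (ι a) = v := tendsto_nhds_unique htendF htendw2
    refine ⟨ι a, hmem a ?_, hfa⟩
    rw [Metric.mem_closedBall, dist_eq_norm] at haball
    exact haball
end

section
/- Consider a continuous dynamical system ẋ = f(x) on ℝⁿ where f is locally Lipschitz, an initial set Θ ⊆ ℝⁿ, and an unsafe set X_u ⊆ ℝⁿ. Suppose there is a continuously differentiable function φ : ℝⁿ → ℝ such that (i) φ(x) ≥ 0 for all x ∈ Θ, (ii) ∇φ(x)·f(x) > 0 whenever φ(x) ≥ 0, and (iii) φ(x) < 0 for all x ∈ X_u. Then no trajectory of the system starting in Θ ever reaches X_u. -/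
/-- barrier certificate safety theorem (single mode): if
`φ ≥ 0` on the initial set, the Lie derivative `∇φ·f` is positive wherever
`φ ≥ 0`, and `φ < 0` on the unsafe set, then no trajectory starting in the
initial set ever reaches the unsafe set. -/
theorem barrier_certificate_safety {n : ℕ}
    (f : (Fin n → ℝ) → (Fin n → ℝ)) (hf : LocallyLipschitz f)
    (Θ Xu : Set (Fin n → ℝ))
    (φ : (Fin n → ℝ) → ℝ) (hφ : ContDiff ℝ 1 φ)
    (hinit : ∀ x ∈ Θ, 0 ≤ φ x)
    (hlie : ∀ x : Fin n → ℝ, 0 ≤ φ x → 0 < fderiv ℝ φ x (f x))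
    (hunsafe : ∀ x ∈ Xu, φ x < 0) :
    ∀ (T : ℝ), 0 ≤ T → ∀ x : ℝ → (Fin n → ℝ),
      x 0 ∈ Θ →
      (∀ t ∈ Set.Icc (0 : ℝ) T, HasDerivAt x (f (x t)) t) →
      ∀ t ∈ Set.Icc (0 : ℝ) T, x t ∉ Xu := by
  intro T hT x hx0 hx' t ht hmem
  set g : ℝ → ℝ := fun u => φ (x u) with hgdef
  have hg0 : 0 ≤ g 0 := hinit _ hx0
  have hgt : g t < 0 := hunsafe _ hmem
  have hderiv : ∀ u ∈ Set.Icc (0:ℝ) T,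
      HasDerivAt g (fderiv ℝ φ (x u) (f (x u))) u := by
    intro u hu
    exact ((hφ.differentiable one_ne_zero (x u)).hasFDerivAt).comp_hasDerivAt u (hx' u hu)
  set S : Set ℝ := {u | u ∈ Set.Icc (0:ℝ) t ∧ g u < 0} with hS
  have htS : t ∈ S := ⟨⟨ht.1, le_rfl⟩, hgt⟩
  have hne : S.Nonempty := ⟨t, htS⟩
  have hbdd : BddBelow S := ⟨0, fun u hu => hu.1.1⟩
  set s := sInf S with hs
  have hs0 : 0 ≤ s := le_csInf hne fun u hu => hu.1.1
  have hst : s ≤ t := csInf_le hbdd htS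
  have hsT : s ∈ Set.Icc (0:ℝ) T := ⟨hs0, hst.trans ht.2⟩
  have hgs : 0 ≤ g s := by
    by_contra h
    push_neg at h
    have hspos : 0 < s := by
      rcases lt_or_eq_of_le hs0 with h' | h'
      · exact h'
      · rw [← h'] at h; exact absurd hg0 (not_le.mpr h)
    have hcont : ContinuousAt g s := (hderiv s hsT).continuousAt
    have hev : ∀ᶠ u in nhds s, g u < 0 := hcont.tendsto.eventually_lt_const h
    rcases Metric.eventually_nhds_iff.mp hev with ⟨δ, hδ, hball⟩
    set u := s - min (δ/2) (s/2) with hu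
    have hmin : 0 < min (δ/2) (s/2) := lt_min (by linarith) (by linarith)
    have hmin' : min (δ/2) (s/2) ≤ s/2 := min_le_right _ _
    have hu0 : 0 ≤ u := by simp only [hu]; linarith
    have hult : u < s := by simp only [hu]; linarith
    have hdist : dist u s < δ := by
      rw [Real.dist_eq]
      have : min (δ/2) (s/2) ≤ δ/2 := min_le_left _ _
      rw [abs_sub_lt_iff]
      constructor <;> simp only [hu] <;> linarith
    have huS : u ∈ S := ⟨⟨hu0, hult.le.trans hst⟩, hball hdist⟩
    exact absurd (csInf_le hbdd huS) (not_le.mpr hult)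
  have hd : 0 < fderiv ℝ φ (x s) (f (x s)) := hlie _ hgs
  have hslope := hasDerivAt_iff_tendsto_slope.mp (hderiv s hsT)
  have hpos : ∀ᶠ u in nhdsWithin s {s}ᶜ, 0 < slope g s u :=
    hslope.eventually_const_lt hd
  rcases Metric.eventually_nhds_iff.mp (eventually_nhdsWithin_iff.mp hpos) with ⟨δ, hδ, hball⟩
  obtain ⟨u, huS, hult⟩ := exists_lt_of_csInf_lt hne (lt_add_of_pos_right s hδ)
  have hne' : u ≠ s := by
    intro h; rw [h] at huS; exact absurd hgs (not_le.mpr huS.2)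
  have hsu : s < u := lt_of_le_of_ne (csInf_le hbdd huS) (Ne.symm hne')
  have hdist : dist u s < δ := by
    rw [Real.dist_eq, abs_sub_lt_iff]; constructor <;> linarith
  have hslopepos : 0 < slope g s u := hball hdist hne'
  rw [slope_def_field] at hslopepos
  have : 0 < (g u - g s) / (u - s) := by
    simpa [div_eq_div_iff] using hslopepos
  have : 0 < g u - g s := by
    have := (div_pos_iff.mp this)
    rcases this with ⟨h1, _⟩ | ⟨_, h2⟩
    · exact h1
    · linarith
  linarith [huS.2]
end
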